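/- The Gray map φ: ℤ₄ⁿ → ℤ₂²ⁿ defined by φ(x) = (β(x), γ(x)) is an isometry from ℤ₄ⁿ with the Lee metric to ℤ₂²ⁿ with the Hamming metric; that is, for all x, y ∈ ℤ₄ⁿ, the Hamming distance between φ(x) and φ(y) equals the Lee distance between x and y. -/

import Mathlib

/-- Lee weight on ℤ₄: w_L(0)=0, w_L(1)=w_L(3)=1, w_L(2)=2. -/
def leeW : ZMod 4 → ℕ := fun a => if a = 0 then 0 else if a = 2 then 2 else 1

/-- Lee weight of a vector: sum of coordinate Lee weights. -/
def leeWt {ι : Type*} [Fintype ι] (x : ι → ZMod 4) : ℕ := ∑ i, leeW (x i)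

/-- β component of the Gray map: β(0)=β(1)=0, β(2)=β(3)=1. -/
def grayβ : ZMod 4 → ZMod 2 := fun a => if a = 0 ∨ a = 1 then 0 else 1

/-- γ component of the Gray map: γ(0)=γ(3)=0, γ(1)=γ(2)=1. -/
def grayγ : ZMod 4 → ZMod 2 := fun a => if a = 0 ∨ a = 3 then 0 else 1

/-- The Gray map φ(x) = (β(x), γ(x)), coded with index set ι ⊕ ι for ℤ₂²ⁿ. -/
def gray {ι : Type*} (x : ι → ZMod 4) : ι ⊕ ι → ZMod 2 :=
  Sum.elim (fun i => grayβ (x i)) (fun i => grayγ (x i))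

lemma gray_key : ∀ a b : ZMod 4,
    ((if grayβ a ≠ grayβ b then 1 else 0) + if grayγ a ≠ grayγ b then 1 else 0)
      = leeW (a - b) := by decide

/-- The Gray map is an isometry: Hamming distance of images equals Lee distance. -/
theorem gray_isometry {n : ℕ} (x y : Fin n → ZMod 4) :
    hammingDist (gray x) (gray y) = leeWt (x - y) := by
  unfold hammingDist leeWt
  rw [Finset.card_filter]
  rw [Fintype.sum_sum_type]
  rw [← Finset.sum_add_distrib]
  exact Finset.sum_congr rfl fun i _ => by simp only [gray, Sum.elim_inl, Sum.elim_inr, Pi.sub_apply]; convert gray_key (x i) (y i) <;> split_ifs <;> simp_all
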